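/- For integers 0 ≤ ℓ ≤ t ≤ k and q > 1, the following identity holds: (1 / (q^{(k−t)²} C(k,t)_q)) · Σ_{i=0}^{k−t} (−1)^{k−t−i} q^{binom(k−t−i,2)} C(k−t,i)_q C(k+i−ℓ,i)_q = C(k−(k−t),ℓ)_q / C(k,ℓ)_q = C(t,ℓ)_q / C(k,ℓ)_q. -/

import Mathlib

/-- Gaussian binomial coefficient `C(a,b)_q = ∏_{t=0}^{b-1} (q^{a−t}−1)/(q^{b−t}−1)` over ℝ. -/
noncomputable def qbinomR (q : ℝ) (a b : ℕ) : ℝ :=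
  ∏ t ∈ Finset.range b, (q ^ (a - t) - 1) / (q ^ (b - t) - 1)

noncomputable def qf (q : ℝ) (n : ℕ) : ℝ := ∏ j ∈ Finset.range n, (q ^ (j + 1) - 1)

lemma qf_pos {q : ℝ} (hq : 1 < q) (n : ℕ) : 0 < qf q n := by
  apply Finset.prod_pos
  intro j _
  have : (1:ℝ) < q ^ (j+1) := one_lt_pow₀ hq (Nat.succ_ne_zero j)
  linarith

lemma qf_ne {q : ℝ} (hq : 1 < q) (n : ℕ) : qf q n ≠ 0 := (qf_pos hq n).ne'

lemma qf_succ (q : ℝ) (n : ℕ) : qf q (n + 1) = qf q n * (q ^ (n + 1) - 1) :=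
  Finset.prod_range_succ _ _

lemma qbinom_eq {q : ℝ} (hq : 1 < q) {a b : ℕ} (hb : b ≤ a) :
    qbinomR q a b = qf q a / (qf q b * qf q (a - b)) := by
  have hnum : ∏ t ∈ Finset.range b, (q ^ (a - t) - 1) = qf q a / qf q (a - b) := by
    have h1 : qf q a = qf q (a - b) * ∏ j ∈ Finset.range b, (q ^ ((a - b) + j + 1) - 1) := by
      unfold qf
      rw [← Finset.prod_range_add, show a - b + b = a from by omega]
    have h2 : ∏ t ∈ Finset.range b, (q ^ (a - t) - 1)
        = ∏ j ∈ Finset.range b, (q ^ ((a - b) + j + 1) - 1) := by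
      rw [← Finset.prod_range_reflect]
      apply Finset.prod_congr rfl
      intro t ht
      simp only [Finset.mem_range] at ht
      rw [show a - (b - 1 - t) = a - b + t + 1 from by omega]
    rw [h2, h1, mul_comm, mul_div_assoc, div_self (qf_ne hq _), mul_one]
  have hden : ∏ t ∈ Finset.range b, (q ^ (b - t) - 1) = qf q b := by
    unfold qf
    rw [← Finset.prod_range_reflect]
    apply Finset.prod_congr rfl
    intro t ht
    simp only [Finset.mem_range] at ht
    rw [show b - (b - 1 - t) = t + 1 from by omega]
  unfold qbinomR
  rw [Finset.prod_div_distrib, hnum, hden, div_div, mul_comm]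

lemma qbinom_pos {q : ℝ} (hq : 1 < q) {a b : ℕ} (hb : b ≤ a) : 0 < qbinomR q a b := by
  rw [qbinom_eq hq hb]
  exact div_pos (qf_pos hq _) (mul_pos (qf_pos hq _) (qf_pos hq _))

lemma qbinom_ne {q : ℝ} (hq : 1 < q) {a b : ℕ} (hb : b ≤ a) : qbinomR q a b ≠ 0 :=
  (qbinom_pos hq hb).ne'

lemma qbinom_zero {q : ℝ} {a b : ℕ} (h : a < b) : qbinomR q a b = 0 := by
  unfold qbinomR
  apply Finset.prod_eq_zero (Finset.mem_range.2 h)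
  have : a - a = 0 := by omega
  rw [this]
  simp

lemma qbinom_self {q : ℝ} (hq : 1 < q) (a : ℕ) : qbinomR q a a = 1 := by
  rw [qbinom_eq hq le_rfl]
  have : a - a = 0 := by omega
  rw [this]
  have h0 : qf q 0 = 1 := by simp [qf]
  rw [h0]
  field_simp [qf_ne hq]

lemma qbinom_zero_right (q : ℝ) (a : ℕ) : qbinomR q a 0 = 1 := by simp [qbinomR]

lemma qbinom_symm {q : ℝ} (hq : 1 < q) {M s : ℕ} (hs : s ≤ M) :
    qbinomR q M (M - s) = qbinomR q M s := by
  rw [qbinom_eq hq (Nat.sub_le M s), qbinom_eq hq hs,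
    show M - (M - s) = s from by omega, mul_comm]

lemma pascalA {q : ℝ} (hq : 1 < q) (a b : ℕ) :
    qbinomR q (a+1) (b+1) = qbinomR q a b + q ^ (b+1) * qbinomR q a (b+1) := by
  rcases lt_trichotomy b a with h | rfl | h
  · obtain ⟨c, rfl⟩ : ∃ c, a = b + 1 + c := ⟨a - b - 1, by omega⟩
    rw [qbinom_eq hq (by omega), qbinom_eq hq (by omega), qbinom_eq hq (by omega),
      show b + 1 + c + 1 - (b + 1) = c + 1 from by omega,
      show b + 1 + c - b = c + 1 from by omega,
      show b + 1 + c - (b + 1) = c from by omega,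
      show b + 1 + c + 1 = (b + 1 + c) + 1 from rfl, qf_succ,
      show b + 1 = b + 1 from rfl, qf_succ q b, qf_succ q c]
    have h1 := qf_ne hq b
    have h2 := qf_ne hq c
    have h3 := qf_ne hq (b + 1 + c)
    have h4 : q ^ (b + 1) - 1 ≠ 0 := by
      have : (1:ℝ) < q ^ (b+1) := one_lt_pow₀ hq (Nat.succ_ne_zero b)
      linarith
    have h5 : q ^ (c + 1) - 1 ≠ 0 := by
      have : (1:ℝ) < q ^ (c+1) := one_lt_pow₀ hq (Nat.succ_ne_zero c)
      linarith
    field_simp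
    ring
  · rw [qbinom_self hq, qbinom_self hq, qbinom_zero (Nat.lt_succ_self b)]
    ring
  · rw [qbinom_zero (by omega), qbinom_zero (by omega), qbinom_zero (by omega)]
    ring

lemma pascalB {q : ℝ} (hq : 1 < q) (a b : ℕ) :
    qbinomR q (a+1) (b+1) = q ^ (a - b) * qbinomR q a b + qbinomR q a (b+1) := by
  rcases lt_trichotomy b a with h | rfl | h
  · obtain ⟨c, rfl⟩ : ∃ c, a = b + 1 + c := ⟨a - b - 1, by omega⟩
    rw [qbinom_eq hq (by omega), qbinom_eq hq (by omega), qbinom_eq hq (by omega),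
      show b + 1 + c + 1 - (b + 1) = c + 1 from by omega,
      show b + 1 + c - b = c + 1 from by omega,
      show b + 1 + c - (b + 1) = c from by omega,
      show b + 1 + c + 1 = (b + 1 + c) + 1 from rfl, qf_succ,
      qf_succ q b, qf_succ q c]
    have h1 := qf_ne hq b
    have h2 := qf_ne hq c
    have h3 := qf_ne hq (b + 1 + c)
    have h4 : q ^ (b + 1) - 1 ≠ 0 := by
      have : (1:ℝ) < q ^ (b+1) := one_lt_pow₀ hq (Nat.succ_ne_zero b)
      linarith
    have h5 : q ^ (c + 1) - 1 ≠ 0 := by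
      have : (1:ℝ) < q ^ (c+1) := one_lt_pow₀ hq (Nat.succ_ne_zero c)
      linarith
    field_simp
    ring
  · rw [qbinom_self hq, qbinom_self hq, qbinom_zero (Nat.lt_succ_self b),
      show b - b = 0 from by omega]
    ring
  · rw [qbinom_zero (by omega), qbinom_zero (by omega), qbinom_zero (by omega)]
    ring

lemma qVdm {q : ℝ} (hq : 1 < q) (n : ℕ) : ∀ (i d : ℕ),
    ∑ j ∈ Finset.range (i+1), q ^ (j^2 + d*j) * qbinomR q i j * qbinomR q n (j+d)
      = qbinomR q (n+i) (i+d) := by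
  intro i
  induction i with
  | zero =>
    intro d
    simp [qbinom_zero_right]
  | succ i ih =>
    intro d
    have key : ∀ j ∈ Finset.range (i+1),
        q ^ ((j+1)^2 + d*(j+1)) * qbinomR q (i+1) (j+1) * qbinomR q n ((j+1)+d)
        = q ^ (i+d+1) * (q ^ (j^2 + (d+1)*j) * qbinomR q i j * qbinomR q n (j+(d+1)))
          + q ^ ((j+1)^2 + d*(j+1)) * qbinomR q i (j+1) * qbinomR q n ((j+1)+d) := by
      intro j hj
      simp only [Finset.mem_range] at hj
      rw [pascalB hq i j]
      obtain ⟨c, rfl⟩ : ∃ c, i = j + c := ⟨i - j, by omega⟩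
      rw [show j + c - j = c from by omega,
        show (j+1)+d = j+(d+1) from by omega,
        show j + c + d + 1 = c + (j^2+2*j+1+d*j+d) - (j^2+d*j+j) from by ring_nf; omega]
      rw [show (j+1)^2 + d*(j+1) = j^2+2*j+1+d*j+d from by ring]
      rw [show j^2 + (d+1)*j = j^2+d*j+j from by ring]
      set A := qbinomR q (j+c) j
      set B := qbinomR q (j+c) (j+1)
      set D := qbinomR q n (j+(d+1))
      have hpow : q ^ (j^2+2*j+1+d*j+d) * q ^ c
          = q ^ (c + (j^2+2*j+1+d*j+d) - (j^2+d*j+j)) * q ^ (j^2+d*j+j) := by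
        rw [← pow_add, ← pow_add]
        congr 1
        have : j^2+d*j+j ≤ c + (j^2+2*j+1+d*j+d) := by nlinarith
        omega
      calc q ^ (j^2+2*j+1+d*j+d) * (q ^ c * A + B) * D
          = (q ^ (j^2+2*j+1+d*j+d) * q ^ c) * A * D
            + q ^ (j^2+2*j+1+d*j+d) * B * D := by ring
        _ = q ^ (c + (j^2+2*j+1+d*j+d) - (j^2+d*j+j)) * (q ^ (j^2+d*j+j) * A * D)
            + q ^ (j^2+2*j+1+d*j+d) * B * D := by rw [hpow]; ring
    calc ∑ j ∈ Finset.range (i+1+1), q ^ (j^2 + d*j) * qbinomR q (i+1) j * qbinomR q n (j+d)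
        = (∑ j ∈ Finset.range (i+1),
            q ^ ((j+1)^2 + d*(j+1)) * qbinomR q (i+1) (j+1) * qbinomR q n ((j+1)+d))
          + q ^ (0^2 + d*0) * qbinomR q (i+1) 0 * qbinomR q n (0+d) :=
          Finset.sum_range_succ' _ _
      _ = (∑ j ∈ Finset.range (i+1),
            (q ^ (i+d+1) * (q ^ (j^2 + (d+1)*j) * qbinomR q i j * qbinomR q n (j+(d+1)))
              + q ^ ((j+1)^2 + d*(j+1)) * qbinomR q i (j+1) * qbinomR q n ((j+1)+d)))
          + q ^ (0^2 + d*0) * qbinomR q i 0 * qbinomR q n (0+d) := by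
          rw [Finset.sum_congr rfl key]
          simp [qbinom_zero_right]
      _ = q ^ (i+d+1) * (∑ j ∈ Finset.range (i+1),
            q ^ (j^2 + (d+1)*j) * qbinomR q i j * qbinomR q n (j+(d+1)))
          + ((∑ j ∈ Finset.range (i+1),
              q ^ ((j+1)^2 + d*(j+1)) * qbinomR q i (j+1) * qbinomR q n ((j+1)+d))
            + q ^ (0^2 + d*0) * qbinomR q i 0 * qbinomR q n (0+d)) := by
          rw [Finset.sum_add_distrib, Finset.mul_sum]
          ring
      _ = q ^ (i+d+1) * qbinomR q (n+i) (i+(d+1))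
          + ∑ j ∈ Finset.range (i+1+1), q ^ (j^2 + d*j) * qbinomR q i j * qbinomR q n (j+d) := by
          rw [ih (d+1), Finset.sum_range_succ'
            (fun j => q ^ (j^2 + d*j) * qbinomR q i j * qbinomR q n (j+d)) (i+1)]
      _ = q ^ (i+d+1) * qbinomR q (n+i) (i+(d+1)) + qbinomR q (n+i) (i+d) := by
          rw [Finset.sum_range_succ, qbinom_zero (Nat.lt_succ_self i), ih d]
          ring
      _ = qbinomR q (n+(i+1)) ((i+1)+d) := by
          rw [show n+(i+1) = (n+i)+1 from by omega, show (i+1)+d = (i+d)+1 from by omega,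
            pascalA hq (n+i) (i+d), show i+(d+1) = (i+d)+1 from by omega]
          ring

lemma alt_rec {q : ℝ} (hq : 1 < q) (M : ℕ) :
    ∑ s ∈ Finset.range (M+1+1), (-1:ℝ)^s * q ^ Nat.choose s 2 * qbinomR q (M+1) s
      = (1 - q^M) * ∑ s ∈ Finset.range (M+1), (-1:ℝ)^s * q ^ Nat.choose s 2 * qbinomR q M s := by
  have key : ∀ s ∈ Finset.range (M+1),
      (-1:ℝ)^(s+1) * q ^ Nat.choose (s+1) 2 * qbinomR q (M+1) (s+1)
      = (-(q^M)) * ((-1:ℝ)^s * q ^ Nat.choose s 2 * qbinomR q M s)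
        + (-1:ℝ)^(s+1) * q ^ Nat.choose (s+1) 2 * qbinomR q M (s+1) := by
    intro s hs
    simp only [Finset.mem_range] at hs
    have hc : Nat.choose (s+1) 2 = Nat.choose s 2 + s := by
      rw [Nat.choose_succ_succ, Nat.choose_one_right, add_comm]
    rw [pascalB hq M s, hc]
    have hpow : q ^ (Nat.choose s 2 + s) * q ^ (M - s) = q ^ M * q ^ Nat.choose s 2 := by
      rw [← pow_add, ← pow_add]
      congr 1
      omega
    calc (-1:ℝ)^(s+1) * q ^ (Nat.choose s 2 + s)
          * (q ^ (M-s) * qbinomR q M s + qbinomR q M (s+1))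
        = (q ^ (Nat.choose s 2 + s) * q ^ (M-s)) * ((-1:ℝ)^(s+1) * qbinomR q M s)
          + (-1:ℝ)^(s+1) * q ^ (Nat.choose s 2 + s) * qbinomR q M (s+1) := by ring
      _ = (q ^ M * q ^ Nat.choose s 2) * ((-1:ℝ)^(s+1) * qbinomR q M s)
          + (-1:ℝ)^(s+1) * q ^ (Nat.choose s 2 + s) * qbinomR q M (s+1) := by rw [hpow]
      _ = (-(q^M)) * ((-1:ℝ)^s * q ^ Nat.choose s 2 * qbinomR q M s)
          + (-1:ℝ)^(s+1) * q ^ (Nat.choose s 2 + s) * qbinomR q M (s+1) := by ring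
  calc ∑ s ∈ Finset.range (M+1+1), (-1:ℝ)^s * q ^ Nat.choose s 2 * qbinomR q (M+1) s
      = (∑ s ∈ Finset.range (M+1), (-1:ℝ)^(s+1) * q ^ Nat.choose (s+1) 2 * qbinomR q (M+1) (s+1))
        + (-1:ℝ)^0 * q ^ Nat.choose 0 2 * qbinomR q (M+1) 0 := Finset.sum_range_succ' _ _
    _ = (∑ s ∈ Finset.range (M+1),
          ((-(q^M)) * ((-1:ℝ)^s * q ^ Nat.choose s 2 * qbinomR q M s)
            + (-1:ℝ)^(s+1) * q ^ Nat.choose (s+1) 2 * qbinomR q M (s+1)))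
        + (-1:ℝ)^0 * q ^ Nat.choose 0 2 * qbinomR q M 0 := by
        rw [Finset.sum_congr rfl key]
        simp [qbinom_zero_right]
    _ = (-(q^M)) * (∑ s ∈ Finset.range (M+1), (-1:ℝ)^s * q ^ Nat.choose s 2 * qbinomR q M s)
        + ((∑ s ∈ Finset.range (M+1), (-1:ℝ)^(s+1) * q ^ Nat.choose (s+1) 2 * qbinomR q M (s+1))
          + (-1:ℝ)^0 * q ^ Nat.choose 0 2 * qbinomR q M 0) := by
        rw [Finset.sum_add_distrib, Finset.mul_sum]
        ring
    _ = (-(q^M)) * (∑ s ∈ Finset.range (M+1), (-1:ℝ)^s * q ^ Nat.choose s 2 * qbinomR q M s)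
        + ∑ s ∈ Finset.range (M+1+1), (-1:ℝ)^s * q ^ Nat.choose s 2 * qbinomR q M s := by
        rw [Finset.sum_range_succ'
          (fun s => (-1:ℝ)^s * q ^ Nat.choose s 2 * qbinomR q M s) (M+1)]
    _ = (1 - q^M) * ∑ s ∈ Finset.range (M+1), (-1:ℝ)^s * q ^ Nat.choose s 2 * qbinomR q M s := by
        rw [Finset.sum_range_succ
          (fun s => (-1:ℝ)^s * q ^ Nat.choose s 2 * qbinomR q M s) (M+1),
          qbinom_zero (Nat.lt_succ_self M)]
        ring

lemma alt {q : ℝ} (hq : 1 < q) : ∀ M : ℕ, 1 ≤ M →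
    ∑ s ∈ Finset.range (M+1), (-1:ℝ)^s * q ^ Nat.choose s 2 * qbinomR q M s = 0 := by
  intro M
  induction M with
  | zero => omega
  | succ M ih =>
    intro _
    rw [alt_rec hq M]
    rcases Nat.eq_zero_or_pos M with rfl | hM
    · simp [qbinom_zero_right]
    · rw [ih hM, mul_zero]

lemma trinom {q : ℝ} (hq : 1 < q) {m i j : ℕ} (hji : j ≤ i) (him : i ≤ m) :
    qbinomR q m i * qbinomR q i j = qbinomR q m j * qbinomR q (m-j) (i-j) := by
  obtain ⟨u, rfl⟩ : ∃ u, i = j + u := ⟨i - j, by omega⟩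
  obtain ⟨v, rfl⟩ : ∃ v, m = j + u + v := ⟨m - (j + u), by omega⟩
  rw [show j + u + v - j = u + v from by omega, show j + u - j = u from by omega,
    qbinom_eq hq (show j + u ≤ j + u + v by omega),
    qbinom_eq hq (show j ≤ j + u by omega),
    qbinom_eq hq (show j ≤ j + u + v by omega),
    qbinom_eq hq (show u ≤ u + v by omega),
    show j + u + v - (j + u) = v from by omega, show j + u - j = u from by omega,
    show j + u + v - j = u + v from by omega, show u + v - u = v from by omega]
  have h1 := qf_ne hq (j + u + v)
  have h2 := qf_ne hq (j + u)
  have h3 := qf_ne hq (u + v)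
  have h4 := qf_ne hq j
  have h5 := qf_ne hq u
  have h6 := qf_ne hq v
  field_simp

lemma orth {q : ℝ} (hq : 1 < q) {m j : ℕ} (hj : j ≤ m) :
    ∑ i ∈ Finset.range (m+1),
        (-1:ℝ)^(m-i) * q ^ Nat.choose (m-i) 2 * qbinomR q m i * qbinomR q i j
      = if j = m then 1 else 0 := by
  obtain ⟨M, rfl⟩ : ∃ M, m = j + M := ⟨m - j, by omega⟩
  have hsplit : ∑ i ∈ Finset.range (j+M+1),
        (-1:ℝ)^(j+M-i) * q ^ Nat.choose (j+M-i) 2 * qbinomR q (j+M) i * qbinomR q i j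
      = ∑ i ∈ Finset.Ico j (j+M+1),
        (-1:ℝ)^(j+M-i) * q ^ Nat.choose (j+M-i) 2 * qbinomR q (j+M) i * qbinomR q i j := by
    rw [Finset.range_eq_Ico, ← Finset.sum_Ico_consecutive _ (Nat.zero_le j) (by omega)]
    have : ∑ i ∈ Finset.Ico 0 j,
        (-1:ℝ)^(j+M-i) * q ^ Nat.choose (j+M-i) 2 * qbinomR q (j+M) i * qbinomR q i j = 0 := by
      apply Finset.sum_eq_zero
      intro i hi
      simp only [Finset.mem_Ico] at hi
      rw [qbinom_zero (show i < j from hi.2)]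
      ring
    rw [this, zero_add]
  rw [hsplit, Finset.sum_Ico_eq_sum_range, show j + M + 1 - j = M + 1 from by omega]
  have hpt : ∀ r ∈ Finset.range (M+1),
      (-1:ℝ)^(j+M-(j+r)) * q ^ Nat.choose (j+M-(j+r)) 2 * qbinomR q (j+M) (j+r) * qbinomR q (j+r) j
      = qbinomR q (j+M) j * ((-1:ℝ)^(M-r) * q ^ Nat.choose (M-r) 2 * qbinomR q M r) := by
    intro r hr
    simp only [Finset.mem_range] at hr
    have ht := trinom hq (show j ≤ j + r by omega) (show j + r ≤ j + M by omega)
    rw [show j + M - (j+r) = M - r from by omega, mul_assoc, ht,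
      show j + M - j = M from by omega, show j + r - j = r from by omega]
    ring
  rw [Finset.sum_congr rfl hpt, ← Finset.mul_sum]
  have hre : ∑ r ∈ Finset.range (M+1), (-1:ℝ)^(M-r) * q ^ Nat.choose (M-r) 2 * qbinomR q M r
      = ∑ s ∈ Finset.range (M+1), (-1:ℝ)^s * q ^ Nat.choose s 2 * qbinomR q M s := by
    have hrefl := Finset.sum_range_reflect
      (fun s => (-1:ℝ)^s * q ^ Nat.choose s 2 * qbinomR q M (M-s)) (M+1)
    calc ∑ r ∈ Finset.range (M+1), (-1:ℝ)^(M-r) * q ^ Nat.choose (M-r) 2 * qbinomR q M r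
        = ∑ r ∈ Finset.range (M+1),
            (-1:ℝ)^(M+1-1-r) * q ^ Nat.choose (M+1-1-r) 2 * qbinomR q M (M-(M+1-1-r)) := by
          apply Finset.sum_congr rfl
          intro r hr
          simp only [Finset.mem_range] at hr
          rw [show M+1-1-r = M - r from by omega, show M-(M-r) = r from by omega]
      _ = ∑ s ∈ Finset.range (M+1), (-1:ℝ)^s * q ^ Nat.choose s 2 * qbinomR q M (M-s) := hrefl
      _ = ∑ s ∈ Finset.range (M+1), (-1:ℝ)^s * q ^ Nat.choose s 2 * qbinomR q M s := by
          apply Finset.sum_congr rfl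
          intro s hs
          simp only [Finset.mem_range] at hs
          rw [qbinom_symm hq (show s ≤ M by omega)]
  rw [hre]
  rcases Nat.eq_zero_or_pos M with rfl | hM
  · simp [qbinom_self hq, qbinom_zero_right]
  · rw [alt hq M hM, mul_zero, if_neg (by omega)]

lemma core {q : ℝ} (hq : 1 < q) (n m : ℕ) :
    ∑ i ∈ Finset.range (m+1),
        (-1:ℝ)^(m-i) * q ^ Nat.choose (m-i) 2 * qbinomR q m i * qbinomR q (n+i) i
      = q ^ (m^2) * qbinomR q n m := by
  have h1 : ∀ i ∈ Finset.range (m+1),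
      qbinomR q (n+i) i = ∑ j ∈ Finset.range (m+1), q^(j^2) * qbinomR q i j * qbinomR q n j := by
    intro i hi
    simp only [Finset.mem_range] at hi
    have hv := qVdm hq n i 0
    simp only [Nat.mul_zero, Nat.add_zero, Nat.zero_mul, mul_zero, add_zero] at hv
    rw [← hv]
    apply Finset.sum_subset (Finset.range_subset_range.2 (by omega))
    intro j hj hj'
    simp only [Finset.mem_range] at hj hj'
    rw [qbinom_zero (show i < j from by omega)]
    ring
  calc ∑ i ∈ Finset.range (m+1),
        (-1:ℝ)^(m-i) * q ^ Nat.choose (m-i) 2 * qbinomR q m i * qbinomR q (n+i) i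
      = ∑ i ∈ Finset.range (m+1), ∑ j ∈ Finset.range (m+1),
          (-1:ℝ)^(m-i) * q ^ Nat.choose (m-i) 2 * qbinomR q m i
            * (q^(j^2) * qbinomR q i j * qbinomR q n j) := by
        apply Finset.sum_congr rfl
        intro i hi
        rw [h1 i hi, Finset.mul_sum]
    _ = ∑ j ∈ Finset.range (m+1), ∑ i ∈ Finset.range (m+1),
          (-1:ℝ)^(m-i) * q ^ Nat.choose (m-i) 2 * qbinomR q m i
            * (q^(j^2) * qbinomR q i j * qbinomR q n j) := Finset.sum_comm
    _ = ∑ j ∈ Finset.range (m+1), (q^(j^2) * qbinomR q n j)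
          * ∑ i ∈ Finset.range (m+1),
              (-1:ℝ)^(m-i) * q ^ Nat.choose (m-i) 2 * qbinomR q m i * qbinomR q i j := by
        apply Finset.sum_congr rfl
        intro j hj
        rw [Finset.mul_sum]
        apply Finset.sum_congr rfl
        intro i hi
        ring
    _ = ∑ j ∈ Finset.range (m+1), (q^(j^2) * qbinomR q n j) * (if j = m then 1 else 0) := by
        apply Finset.sum_congr rfl
        intro j hj
        simp only [Finset.mem_range] at hj
        rw [orth hq (show j ≤ m from by omega)]
    _ = q ^ (m^2) * qbinomR q n m := by
        simp only [mul_ite, mul_one, mul_zero]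
        rw [Finset.sum_ite_eq' (Finset.range (m+1)) m]
        simp


/-- **Partial-swap walk eigenvalue identity on the Grassmann.** For `0 ≤ ℓ ≤ t ≤ k` and
`q > 1`:
`(1/(q^{(k−t)²} C(k,t)_q)) ∑_{i=0}^{k−t} (−1)^{k−t−i} q^{binom(k−t−i,2)}
  C(k−t,i)_q C(k+i−ℓ,i)_q = C(t,ℓ)_q / C(k,ℓ)_q`. -/
theorem partial_swap_walk_eigenvalue_identity
    (q : ℝ) (hq : 1 < q) (k t ℓ : ℕ) (hℓt : ℓ ≤ t) (htk : t ≤ k) :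
    (1 / (q ^ ((k - t) ^ 2) * qbinomR q k t))
        * ∑ i ∈ Finset.range (k - t + 1),
            (-1 : ℝ) ^ (k - t - i) * q ^ Nat.choose (k - t - i) 2
              * qbinomR q (k - t) i * qbinomR q (k + i - ℓ) i
      = qbinomR q t ℓ / qbinomR q k ℓ := by
  have hℓk : ℓ ≤ k := hℓt.trans htk
  have hsum : (∑ i ∈ Finset.range (k - t + 1),
        (-1 : ℝ) ^ (k - t - i) * q ^ Nat.choose (k - t - i) 2
          * qbinomR q (k - t) i * qbinomR q (k + i - ℓ) i)
      = q ^ ((k-t)^2) * qbinomR q (k-ℓ) (k-t) := by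
    rw [← core hq (k-ℓ) (k-t)]
    apply Finset.sum_congr rfl
    intro i hi
    rw [show k + i - ℓ = (k - ℓ) + i from by omega]
  rw [hsum]
  have h1 : q ^ ((k-t)^2) ≠ 0 := by positivity
  have h2 : qbinomR q k t ≠ 0 := qbinom_ne hq htk
  have h3 : qbinomR q k ℓ ≠ 0 := qbinom_ne hq hℓk
  have key : qbinomR q (k-ℓ) (k-t) * qbinomR q k ℓ = qbinomR q t ℓ * qbinomR q k t := by
    obtain ⟨e, rfl⟩ : ∃ e, t = ℓ + e := ⟨t - ℓ, by omega⟩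
    obtain ⟨c, rfl⟩ : ∃ c, k = ℓ + e + c := ⟨k - (ℓ + e), by omega⟩
    rw [show ℓ + e + c - (ℓ + e) = c from by omega, show ℓ + e + c - ℓ = e + c from by omega,
      qbinom_eq hq (show c ≤ e + c by omega),
      qbinom_eq hq (show ℓ ≤ ℓ + e + c by omega),
      qbinom_eq hq (show ℓ ≤ ℓ + e by omega),
      qbinom_eq hq (show ℓ + e ≤ ℓ + e + c by omega),
      show e + c - c = e from by omega, show ℓ + e + c - ℓ = e + c from by omega,
      show ℓ + e - ℓ = e from by omega, show ℓ + e + c - (ℓ + e) = c from by omega]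
    have g1 := qf_ne hq (ℓ + e + c)
    have g2 := qf_ne hq (ℓ + e)
    have g3 := qf_ne hq (e + c)
    have g4 := qf_ne hq ℓ
    have g5 := qf_ne hq e
    have g6 := qf_ne hq c
    field_simp
  field_simp
  linear_combination key
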